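/- arXiv:1501.03417 — 4 statements merged into one kernel-verified Lean document; each statement's English description precedes it below -/
import Mathlib

section
/- Let T > 0, let w ∈ C¹(ℝ × [0,T]) be bounded, let Φ and P be C¹, and let f be Lipschitz with f(0,w) = 0 for all w. If ρ ∈ C^{1,2}(ℝ × [0,T]) is bounded and satisfies ρ_t + (ρ(Φ(w) − P(ρ)))_x = f(ρ,w) pointwise on ℝ × (0,T) with ρ(x,0) ≥ 0 for all x, then ρ(x,t) ≥ 0 for all (x,t) ∈ ℝ × [0,T]. -/
open MeasureTheory Filter Set

/-- One-sided derivative test: if `g` has a minimum at the right endpoint `b`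
of `[a,b]` and is differentiable at `b`, then `g' ≤ 0`. -/
lemma deriv_nonpos_of_min_left {g : ℝ → ℝ} {g' a b : ℝ}
    (hg : HasDerivAt g g' b) (hab : a < b) (hmin : ∀ t ∈ Set.Icc a b, g b ≤ g t) :
    g' ≤ 0 := by
  rw [hasDerivAt_iff_tendsto_slope] at hg
  have h1 : Tendsto (slope g b) (nhdsWithin b (Set.Iio b)) (nhds g') :=
    hg.mono_left (nhdsWithin_mono _ (fun y hy => ne_of_lt hy))
  refine le_of_tendsto h1 ?_
  filter_upwards [Ioo_mem_nhdsLT_of_mem (Set.mem_Ioc.2 ⟨hab, le_refl b⟩)] with y hy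
  have h2 : g b ≤ g y := hmin y ⟨hy.1.le, hy.2.le⟩
  rw [slope_def_field]
  apply div_nonpos_of_nonneg_of_nonpos (by linarith) (by linarith [hy.2])


set_option maxHeartbeats 2000000 in
/-- Nonnegativity of classical solutions of the continuity equation
ρ_t + (ρ(Φ(w) − P(ρ)))_x = f(ρ,w) with f(0,·) = 0 and nonnegative initial data. -/
theorem nonnegativity_of_density
    (T : ℝ) (hT : 0 < T)
    (w : ℝ → ℝ → ℝ) (hw : ContDiff ℝ 1 (Function.uncurry w))
    (hwb : ∃ C : ℝ, ∀ x t : ℝ, |w x t| ≤ C)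
    (Φ P : ℝ → ℝ) (hΦ : ContDiff ℝ 1 Φ) (hP : ContDiff ℝ 1 P)
    (f : ℝ → ℝ → ℝ) (K : NNReal) (hf : LipschitzWith K (Function.uncurry f))
    (hf0 : ∀ v : ℝ, f 0 v = 0)
    (ρ : ℝ → ℝ → ℝ)
    (hρc : ContinuousOn (fun p : ℝ × ℝ => ρ p.1 p.2) (Set.univ ×ˢ Set.Icc 0 T))
    (hρb : ∃ C : ℝ, ∀ x t : ℝ, |ρ x t| ≤ C)
    (hreg : ∀ x t : ℝ, 0 < t → t < T →
      DifferentiableAt ℝ (fun s => ρ x s) t ∧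
      DifferentiableAt ℝ (fun y => ρ y t) x ∧
      DifferentiableAt ℝ (fun y => deriv (fun z => ρ z t) y) x)
    (hpde : ∀ x t : ℝ, 0 < t → t < T →
      deriv (fun s => ρ x s) t
        + deriv (fun y => ρ y t * (Φ (w y t) - P (ρ y t))) x
        = f (ρ x t) (w x t))
    (hinit : ∀ x : ℝ, 0 ≤ ρ x 0) :
    ∀ x t : ℝ, t ∈ Set.Icc 0 T → 0 ≤ ρ x t := by
  obtain ⟨Cw, hCw⟩ := hwb
  obtain ⟨Cρ, hCρ⟩ := hρb
  have hCw0 : 0 ≤ Cw := le_trans (abs_nonneg _) (hCw 0 0)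
  have hCρ0 : 0 ≤ Cρ := le_trans (abs_nonneg _) (hCρ 0 0)
  have hwdiff : Differentiable ℝ (Function.uncurry w) := hw.differentiable one_ne_zero
  have hΦdiff : Differentiable ℝ Φ := hΦ.differentiable one_ne_zero
  have hPdiff : Differentiable ℝ P := hP.differentiable one_ne_zero
  -- spatial derivative of w
  have hwx : ∀ x t : ℝ, HasDerivAt (fun y => w y t)
      (fderiv ℝ (Function.uncurry w) (x, t) (1, 0)) x := by
    intro x t
    have h1 := (hwdiff (x, t)).hasFDerivAt
    have h2 : HasDerivAt (fun y : ℝ => (y, t)) ((1 : ℝ), (0 : ℝ)) x :=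
      (hasDerivAt_id x).prodMk (hasDerivAt_const x t)
    exact h1.comp_hasDerivAt x h2
  have hwdc : Continuous (fun p : ℝ × ℝ => fderiv ℝ (Function.uncurry w) p (1, 0)) :=
    (hw.continuous_fderiv one_ne_zero).clm_apply continuous_const
  -- bound A for |Φ'| on the range of w
  obtain ⟨A₀, hA₀⟩ := isCompact_Icc.exists_bound_of_continuousOn
    ((hΦ.continuous_deriv le_rfl).continuousOn : ContinuousOn (deriv Φ) (Icc (-Cw) Cw))
  set A : ℝ := max A₀ 0 with hAdef
  have hA0 : 0 ≤ A := le_max_right _ _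
  have hA : ∀ v : ℝ, |v| ≤ Cw → |deriv Φ v| ≤ A := by
    intro v hv
    have := hA₀ v (abs_le.1 hv |> fun h => ⟨h.1, h.2⟩)
    rw [Real.norm_eq_abs] at this
    exact le_trans this (le_max_left _ _)
  -- bound S for the characteristic speed
  have hqc : Continuous (fun p : ℝ × ℝ => Φ p.1 - P p.2 - p.2 * deriv P p.2) := by
    have h1 : Continuous (deriv P) := hP.continuous_deriv le_rfl
    fun_prop
  obtain ⟨S₀, hS₀⟩ := (isCompact_Icc.prod isCompact_Icc :
      IsCompact (Icc (-Cw) Cw ×ˢ Icc (-Cρ) Cρ)).exists_bound_of_continuousOn hqc.continuousOn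
  set S : ℝ := max S₀ 0 + 1 with hSdef
  have hS1 : 1 ≤ S := by simp [hSdef, le_max_right]
  have hS0 : 0 ≤ S := by linarith
  have hS : ∀ a b : ℝ, |a| ≤ Cw → |b| ≤ Cρ → |Φ a - P b - b * deriv P b| ≤ S - 1 := by
    intro a b ha hb
    have := hS₀ (a, b) ⟨abs_le.1 ha, abs_le.1 hb⟩
    rw [Real.norm_eq_abs] at this
    have h2 : S₀ ≤ S - 1 := by simp [hSdef, le_max_left]
    linarith
  -- main claim on (0, T)
  have key : ∀ x₀ t₀ : ℝ, 0 < t₀ → t₀ < T → 0 ≤ ρ x₀ t₀ := by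
    intro x₀ t₀ ht₀pos ht₀T
    set R : ℝ := S * t₀ + 1 with hRdef
    -- bound W for |w_x| on the base rectangle
    obtain ⟨W₀, hW₀⟩ := (isCompact_Icc.prod isCompact_Icc :
        IsCompact (Icc (x₀ - R) (x₀ + R) ×ˢ Icc (0:ℝ) t₀)).exists_bound_of_continuousOn
        hwdc.continuousOn
    set W : ℝ := max W₀ 0 with hWdef
    have hW0 : 0 ≤ W := le_max_right _ _
    have hW : ∀ p : ℝ × ℝ, p ∈ Icc (x₀ - R) (x₀ + R) ×ˢ Icc (0:ℝ) t₀ →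
        |fderiv ℝ (Function.uncurry w) p (1, 0)| ≤ W := by
      intro p hp
      have := hW₀ p hp
      rw [Real.norm_eq_abs] at this
      exact le_trans this (le_max_left _ _)
    set lam : ℝ := (K : ℝ) + A * W + 1 with hlamdef
    have hlam0 : 0 ≤ lam := by positivity
    clear_value A S R W lam
    -- the ε-approximate positivity
    have main : ∀ ε : ℝ, 0 < ε →
        0 ≤ ρ x₀ t₀ * Real.exp (-(lam * t₀)) + ε * t₀ + ε * 2 := by
      intro ε hε
      by_contra hneg
      push_neg at hneg
      set η : ℝ := min (1/2 : ℝ) (ε / (Cρ + 1)) with hηdef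
      have hηpos : 0 < η := lt_min (by norm_num) (div_pos hε (by linarith))
      have hημ : (Cρ + 1) * η ≤ ε := by
        have h1 : η ≤ ε / (Cρ + 1) := min_le_right _ _
        rw [le_div_iff₀ (by linarith)] at h1
        linarith
      have hη2 : η ≤ 1 := le_trans (min_le_left _ _) (by norm_num)
      clear_value η
      set u : ℝ → ℝ → ℝ := fun x t => ρ x t * Real.exp (-(lam * t)) + ε * t +
        ε * ((x - x₀ + R - S * t)⁻¹ + (R - S * t - (x - x₀))⁻¹) with hudef
      set Kc : Set (ℝ × ℝ) := {p | p.2 ∈ Icc (0:ℝ) t₀ ∧ η ≤ p.1 - x₀ + R - S * p.2 ∧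
        η ≤ R - S * p.2 - (p.1 - x₀)} with hKcdef
      have hKsub : Kc ⊆ Icc (x₀ - R) (x₀ + R) ×ˢ Icc (0:ℝ) t₀ := by
        rintro ⟨x, t⟩ ⟨ht, h1, h2⟩
        have hst : 0 ≤ S * t := mul_nonneg hS0 ht.1
        exact ⟨⟨by nlinarith, by nlinarith⟩, ht⟩
      have hKclosed : IsClosed Kc := by
        have heq : Kc = ((fun p : ℝ × ℝ => p.2) ⁻¹' Icc 0 t₀)
            ∩ (((fun p : ℝ × ℝ => p.1 - x₀ + R - S * p.2) ⁻¹' Ici η)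
            ∩ ((fun p : ℝ × ℝ => R - S * p.2 - (p.1 - x₀)) ⁻¹' Ici η)) := by
          ext p; simp [hKcdef, and_assoc]
        rw [heq]
        exact (isClosed_Icc.preimage continuous_snd).inter
          ((isClosed_Ici.preimage (by fun_prop)).inter (isClosed_Ici.preimage (by fun_prop)))
      have hKcomp : IsCompact Kc :=
        (isCompact_Icc.prod isCompact_Icc).of_isClosed_subset hKclosed hKsub
      have hx₀K : (x₀, t₀) ∈ Kc := by
        refine ⟨⟨ht₀pos.le, le_refl _⟩, ?_, ?_⟩ <;>
          · simp only [hRdef]; linarith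
      have hKTsub : Kc ⊆ univ ×ˢ Icc 0 T :=
        fun p hp => ⟨trivial, ⟨hp.1.1, le_trans hp.1.2 ht₀T.le⟩⟩
      have hucont : ContinuousOn (fun p : ℝ × ℝ => u p.1 p.2) Kc := by
        refine ContinuousOn.add (ContinuousOn.add ?_ (by fun_prop)) ?_
        · exact (hρc.mono hKTsub).mul (by fun_prop)
        · refine continuousOn_const.mul (ContinuousOn.add ?_ ?_)
          · exact ContinuousOn.inv₀ (by fun_prop)
              (fun p hp => ne_of_gt (lt_of_lt_of_le hηpos hp.2.1))
          · exact ContinuousOn.inv₀ (by fun_prop)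
              (fun p hp => ne_of_gt (lt_of_lt_of_le hηpos hp.2.2))
      obtain ⟨⟨x₁, t₁⟩, hmem, hminOn⟩ := hKcomp.exists_isMinOn ⟨_, hx₀K⟩ hucont
      have ht₁mem : t₁ ∈ Icc (0:ℝ) t₀ := hmem.1
      have hD1η : η ≤ x₁ - x₀ + R - S * t₁ := hmem.2.1
      have hD2η : η ≤ R - S * t₁ - (x₁ - x₀) := hmem.2.2
      set D1 : ℝ := x₁ - x₀ + R - S * t₁ with hD1def
      set D2 : ℝ := R - S * t₁ - (x₁ - x₀) with hD2def
      have hD1pos : 0 < D1 := lt_of_lt_of_le hηpos hD1η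
      have hD2pos : 0 < D2 := lt_of_lt_of_le hηpos hD2η
      have ht₁T : t₁ < T := lt_of_le_of_lt ht₁mem.2 ht₀T
      have hE : 0 < Real.exp (-(lam * t₁)) := Real.exp_pos _
      have hE1 : Real.exp (-(lam * t₁)) ≤ 1 := by
        rw [Real.exp_le_one_iff]
        have : 0 ≤ lam * t₁ := mul_nonneg hlam0 ht₁mem.1
        linarith
      -- the minimum value is negative
      have humin : u x₁ t₁ < 0 := by
        refine lt_of_le_of_lt (hminOn hx₀K) ?_
        have h1 : x₀ - x₀ + R - S * t₀ = 1 := by rw [hRdef]; ring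
        have h2 : R - S * t₀ - (x₀ - x₀) = 1 := by rw [hRdef]; ring
        simp only [hudef, h1, h2]
        norm_num
        linarith
      have huval : u x₁ t₁ = ρ x₁ t₁ * Real.exp (-(lam * t₁)) + ε * t₁ + ε * (D1⁻¹ + D2⁻¹) := by
        rw [hudef, hD1def, hD2def]
      clear_value D1 D2
      have hψnn : 0 ≤ D1⁻¹ + D2⁻¹ := by positivity
      have hεt₁ : 0 ≤ ε * t₁ := mul_nonneg hε.le ht₁mem.1
      have hεψ : 0 ≤ ε * (D1⁻¹ + D2⁻¹) := mul_nonneg hε.le hψnn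
      -- ρ is negative at the minimum point
      have hr1 : ρ x₁ t₁ < 0 := by
        by_contra hr
        push_neg at hr
        have h2 : 0 ≤ ρ x₁ t₁ * Real.exp (-(lam * t₁)) := mul_nonneg hr hE.le
        rw [huval] at humin
        linarith
      -- t₁ > 0
      have ht₁pos : 0 < t₁ := by
        rcases eq_or_lt_of_le ht₁mem.1 with h | h
        · exfalso
          have h3 : 0 ≤ ρ x₁ t₁ := by rw [← h]; exact hinit x₁
          have h2 : 0 ≤ ρ x₁ t₁ * Real.exp (-(lam * t₁)) := mul_nonneg h3 hE.le
          rw [huval] at humin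
          linarith
        · exact h
      -- the minimum is away from the lateral boundary
      have hρE : -Cρ ≤ ρ x₁ t₁ * Real.exp (-(lam * t₁)) := by
        have h1 := (abs_le.1 (hCρ x₁ t₁)).1
        nlinarith [hE, hE1]
      have hbdry : ∀ d : ℝ, d = D1 ∨ d = D2 → η < d := by
        intro d hd
        rcases lt_or_ge η d with h | h
        · exact h
        have hdpos : 0 < d := by rcases hd with h'|h' <;> (rw [h']; assumption)
        have hεη : Cρ + 1 ≤ ε * d⁻¹ := by
          rw [← div_eq_mul_inv, le_div_iff₀ hdpos]
          calc (Cρ + 1) * d ≤ (Cρ + 1) * η := by nlinarith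
            _ ≤ ε := hημ
        have h5 : 0 ≤ ε * D1⁻¹ := mul_nonneg hε.le (by positivity)
        have h6 : 0 ≤ ε * D2⁻¹ := mul_nonneg hε.le (by positivity)
        exfalso
        rw [huval] at humin
        rcases hd with h'|h' <;> rw [h'] at hεη <;> nlinarith
      have hD1s : η < D1 := hbdry D1 (Or.inl rfl)
      have hD2s : η < D2 := hbdry D2 (Or.inr rfl)
      -- regularity at the minimum point
      obtain ⟨hregt, hregx, -⟩ := hreg x₁ t₁ ht₁pos ht₁T
      set rx : ℝ := deriv (fun y => ρ y t₁) x₁ with hrxdef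
      set rt : ℝ := deriv (fun s => ρ x₁ s) t₁ with hrtdef
      have hrx : HasDerivAt (fun y => ρ y t₁) rx x₁ := hregx.hasDerivAt
      have hrt : HasDerivAt (fun s => ρ x₁ s) rt t₁ := hregt.hasDerivAt
      set wx : ℝ := fderiv ℝ (Function.uncurry w) (x₁, t₁) (1, 0) with hwxdef
      have hwx₁ : HasDerivAt (fun y => w y t₁) wx x₁ := hwx x₁ t₁
      set A₁ : ℝ := deriv Φ (w x₁ t₁) with hA₁def
      set B₁ : ℝ := deriv P (ρ x₁ t₁) with hB₁def
      set E : ℝ := Real.exp (-(lam * t₁)) with hEdef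
      -- spatial derivative of u at the minimum vanishes
      have hg₁d : HasDerivAt (fun y => u y t₁)
          (rx * E + ε * (-1 / D1 ^ 2 + 1 / D2 ^ 2)) x₁ := by
        rw [hudef]
        have h1 : HasDerivAt (fun y : ℝ => y - x₀ + R - S * t₁) 1 x₁ := by
          simpa using (((hasDerivAt_id x₁).sub_const x₀).add_const R).sub_const (S * t₁)
        have h2 : HasDerivAt (fun y : ℝ => R - S * t₁ - (y - x₀)) (-1) x₁ := by
          simpa using ((hasDerivAt_id x₁).sub_const x₀).const_sub (R - S * t₁)
        have h3 := h1.inv (by rw [← hD1def]; exact ne_of_gt hD1pos)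
        have h4 := h2.inv (by rw [← hD2def]; exact ne_of_gt hD2pos)
        rw [← hD1def] at h3
        rw [← hD2def] at h4
        have h5 := ((hrx.mul_const E).add_const (ε * t₁)).add ((h3.add h4).const_mul ε)
        exact h5.congr_deriv (by ring)
      have hUopen : IsOpen {y : ℝ | η < y - x₀ + R - S * t₁ ∧ η < R - S * t₁ - (y - x₀)} := by
        have h1 : IsOpen {y : ℝ | η < y - x₀ + R - S * t₁} :=
          isOpen_lt continuous_const (by fun_prop)
        have h2 : IsOpen {y : ℝ | η < R - S * t₁ - (y - x₀)} :=
          isOpen_lt continuous_const (by fun_prop)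
        exact h1.inter h2
      have hmemU : x₁ ∈ {y : ℝ | η < y - x₀ + R - S * t₁ ∧ η < R - S * t₁ - (y - x₀)} := by
        constructor <;> [rw [← hD1def]; rw [← hD2def]] <;> assumption
      have hlocmin : IsLocalMin (fun y => u y t₁) x₁ := by
        filter_upwards [hUopen.mem_nhds hmemU] with y hy
        have hmem' : ((y : ℝ), t₁) ∈ Kc := by
          rw [hKcdef]
          simp only [Set.mem_setOf_eq]
          exact ⟨ht₁mem, hy.1.le, hy.2.le⟩
        simpa using hminOn hmem'
      have hzero : rx * E + ε * (-1 / D1 ^ 2 + 1 / D2 ^ 2) = 0 := by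
        rw [← hg₁d.deriv]
        exact hlocmin.deriv_eq_zero
      -- temporal derivative of u at the minimum is ≤ 0
      have hg₂d : HasDerivAt (fun s => u x₁ s)
          (rt * E + ρ x₁ t₁ * (-lam * E) + ε + ε * (S / D1 ^ 2 + S / D2 ^ 2)) t₁ := by
        rw [hudef]
        have hexp : HasDerivAt (fun s : ℝ => Real.exp (-(lam * s))) (-lam * E) t₁ := by
          have h1 : HasDerivAt (fun s : ℝ => -(lam * s)) (-lam) t₁ := by
            exact (by simpa using ((hasDerivAt_id t₁).const_mul lam) : HasDerivAt (fun s : ℝ => lam * s) lam t₁).neg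
          rw [hEdef]
          simpa [mul_comm] using h1.exp
        have h1 : HasDerivAt (fun s : ℝ => x₁ - x₀ + R - S * s) (-S) t₁ := by
          simpa using ((hasDerivAt_id t₁).const_mul S).const_sub (x₁ - x₀ + R)
        have h2 : HasDerivAt (fun s : ℝ => R - S * s - (x₁ - x₀)) (-S) t₁ := by
          simpa using (((hasDerivAt_id t₁).const_mul S).const_sub R).sub_const (x₁ - x₀)
        have h3 := h1.inv (by rw [← hD1def]; exact ne_of_gt hD1pos)
        have h4 := h2.inv (by rw [← hD2def]; exact ne_of_gt hD2pos)
        rw [← hD1def] at h3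
        rw [← hD2def] at h4
        have h6 : HasDerivAt (fun s : ℝ => ε * s) ε t₁ := by
          simpa using (hasDerivAt_id t₁).const_mul ε
        have h5 := ((hrt.mul hexp).add h6).add ((h3.add h4).const_mul ε)
        exact h5.congr_deriv (by rw [hEdef]; ring)
      have hminT : ∀ t ∈ Icc (0:ℝ) t₁, u x₁ t₁ ≤ u x₁ t := by
        intro t ht'
        have hst : S * t ≤ S * t₁ := mul_le_mul_of_nonneg_left ht'.2 hS0
        have hmem' : ((x₁ : ℝ), t) ∈ Kc := by
          rw [hKcdef]
          simp only [Set.mem_setOf_eq]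
          refine ⟨⟨ht'.1, le_trans ht'.2 ht₁mem.2⟩, ?_, ?_⟩ <;>
            linarith [hD1η, hD2η, hD1def, hD2def, hst]
        simpa using hminOn hmem'
      have hg₂le : rt * E + ρ x₁ t₁ * (-lam * E) + ε + ε * (S / D1 ^ 2 + S / D2 ^ 2) ≤ 0 :=
        deriv_nonpos_of_min_left hg₂d ht₁pos hminT
      -- the PDE at the minimum point
      have hΦd : HasDerivAt Φ A₁ (w x₁ t₁) := (hΦdiff _).hasDerivAt
      have hPd : HasDerivAt P B₁ (ρ x₁ t₁) := (hPdiff _).hasDerivAt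
      have hflux : HasDerivAt (fun y => ρ y t₁ * (Φ (w y t₁) - P (ρ y t₁)))
          (rx * (Φ (w x₁ t₁) - P (ρ x₁ t₁)) + ρ x₁ t₁ * (A₁ * wx - B₁ * rx)) x₁ :=
        hrx.mul ((hΦd.comp x₁ hwx₁).sub (hPd.comp x₁ hrx))
      have hpde₁ := hpde x₁ t₁ ht₁pos ht₁T
      rw [hflux.deriv, ← hrtdef] at hpde₁
      set r : ℝ := ρ x₁ t₁ with hrdef
      set v : ℝ := w x₁ t₁ with hvdef
      set c : ℝ := Φ v - P r - r * B₁ with hcdef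
      have hrtval : rt = f r v - rx * c - r * (A₁ * wx) := by
        rw [hcdef]
        linear_combination hpde₁
      -- bounds at the minimum point
      have hfb : (K:ℝ) * r ≤ f r v := by
        have h1 := hf.dist_le_mul (r, v) (0, v)
        rw [Prod.dist_eq] at h1
        simp [Real.dist_eq, hf0 v] at h1
        rw [abs_of_neg hr1] at h1
        linarith [(abs_le.1 h1).1]
      have hA₁b : |A₁| ≤ A := by
        rw [hA₁def, hvdef]
        exact hA _ (hCw x₁ t₁)
      have hwxb : |wx| ≤ W := by
        rw [hwxdef]
        exact hW _ (hKsub hmem)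
      have hcb : |c| ≤ S - 1 := by
        rw [hcdef, hB₁def, hvdef, hrdef]
        exact hS _ _ (hCw x₁ t₁) (hCρ x₁ t₁)
      -- assemble the contradiction
      have hzero' : rx * E = ε * (1 / D1 ^ 2 - 1 / D2 ^ 2) := by linear_combination hzero
      have habs : |A₁ * wx| ≤ A * W := by
        rw [abs_mul]
        exact mul_le_mul hA₁b hwxb (abs_nonneg _) hA0
      have hT1 : -r ≤ f r v - r * (A₁ * wx) - lam * r := by
        have hz := (abs_le.1 habs).1
        have hprod : 0 ≤ (-r) * (A₁ * wx + A * W) :=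
          mul_nonneg (by linarith) (by linarith)
        have hexpand : (-r) * (A₁ * wx + A * W) = -(r * (A₁ * wx)) - A * W * r := by ring
        have hlam_eq : lam * r = (K : ℝ) * r + A * W * r + r := by rw [hlamdef]; ring
        linarith [hprod, hexpand, hfb, hlam_eq]
      have key2 : 0 < (f r v - r * (A₁ * wx) - lam * r) * E + ε
          + ε * ((S - c) * (1 / D1 ^ 2) + (S + c) * (1 / D2 ^ 2)) := by
        have hmulE := mul_le_mul_of_nonneg_right hT1 hE.le
        have hrE : 0 < (-r) * E := mul_pos (by linarith) hE
        have h1 := abs_le.1 hcb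
        have p1 : (0:ℝ) ≤ 1 / D1 ^ 2 := by positivity
        have p2 : (0:ℝ) ≤ 1 / D2 ^ 2 := by positivity
        have hT2 : 0 ≤ (S - c) * (1 / D1 ^ 2) + (S + c) * (1 / D2 ^ 2) := by
          have q1 := mul_nonneg (by linarith : (0:ℝ) ≤ S - c) p1
          have q2 := mul_nonneg (by linarith : (0:ℝ) ≤ S + c) p2
          linarith
        have hεT2 : 0 ≤ ε * ((S - c) * (1 / D1 ^ 2) + (S + c) * (1 / D2 ^ 2)) :=
          mul_nonneg hε.le hT2
        linarith [hmulE, hrE, hεT2, hε]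
      have hiden2 : rt * E + r * (-lam * E) + ε + ε * (S / D1 ^ 2 + S / D2 ^ 2)
          = (f r v - r * (A₁ * wx) - lam * r) * E + ε
            + ε * ((S - c) * (1 / D1 ^ 2) + (S + c) * (1 / D2 ^ 2)) := by
        linear_combination E * hrtval - c * hzero'
      linarith [hg₂le, key2, hiden2]

    -- pass to the limit ε → 0
    have hE₀ : 0 < Real.exp (-(lam * t₀)) := Real.exp_pos _
    by_contra hcon
    push_neg at hcon
    set a : ℝ := ρ x₀ t₀ * Real.exp (-(lam * t₀)) with hadef
    have ha : a < 0 := mul_neg_of_neg_of_pos hcon hE₀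
    have ht2 : (0:ℝ) < t₀ + 2 := by linarith
    have hεv : 0 < -a / (2 * (t₀ + 2)) := div_pos (by linarith) (by linarith)
    have h5 := main _ hεv
    have h6 : -a / (2 * (t₀ + 2)) * (t₀ + 2) = -a / 2 := by
      field_simp
    nlinarith [h5, h6, ha]
  -- wrap up : t = 0, 0 < t < T, t = T
  intro x t ht
  rcases eq_or_lt_of_le ht.1 with h0 | h0
  · rw [← h0]; exact hinit x
  rcases eq_or_lt_of_le ht.2 with hTt | hTt
  · -- t = T : use continuity from the left
    subst hTt
    have hc : ContinuousWithinAt (fun s => ρ x s) (Icc 0 t) t := by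
      have h1 : ContinuousWithinAt (fun p : ℝ × ℝ => ρ p.1 p.2)
          (univ ×ˢ Icc 0 t) (x, t) := hρc _ (by simp [ht.1])
      have h2 : ContinuousWithinAt (fun s : ℝ => ((x : ℝ), s)) (Icc 0 t) t :=
        (continuous_const.prodMk continuous_id).continuousWithinAt
      exact h1.comp h2 (fun s hs => by simp [hs])
    have h3 : Tendsto (fun s => ρ x s) (nhdsWithin t (Ioo 0 t)) (nhds (ρ x t)) :=
      hc.tendsto.mono_left (nhdsWithin_mono _ (fun s hs => ⟨hs.1.le, hs.2.le⟩))
    have hne : (nhdsWithin t (Ioo 0 t)).NeBot := by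
      exact right_nhdsWithin_Ioo_neBot h0
    refine ge_of_tendsto h3 ?_
    filter_upwards [self_mem_nhdsWithin] with s hs
    exact key x s hs.1 hs.2
  · exact key x t h0 hTt
end

section
/- Let Φ : ℝ → ℝ be C² with Φ' > 0 and let P : (0,∞) → ℝ be C². Fix ρ > 0, m ∈ ℝ, write w = m/ρ, and let G₁(ρ,m) = C₁ − (Φ(m/ρ) − P(ρ)). Then for every vector r = (X,Y) ∈ ℝ² with r · ∇G₁(ρ,m) = 0 one has Y = X(m/ρ + ρP'(ρ)/Φ'(w)) and the Hessian quadratic form satisfies ∇²G₁(ρ,m)(r,r) = X² ( (2P'(ρ) + ρP''(ρ))/ρ − Φ''(w) (P'(ρ)/Φ'(w))² ). -/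
open ContinuousLinearMap Set

noncomputable def Lmap (a b : ℝ) : ℝ × ℝ →L[ℝ] ℝ :=
  a • ContinuousLinearMap.fst ℝ ℝ ℝ + b • ContinuousLinearMap.snd ℝ ℝ ℝ

@[simp] lemma Lmap_apply (a b : ℝ) (v : ℝ × ℝ) : Lmap a b v = a * v.1 + b * v.2 := by
  simp [Lmap, smul_eq_mul]

lemma hasFDerivAt_q (p : ℝ × ℝ) (hp : p.1 ≠ 0) :
    HasFDerivAt (fun p : ℝ × ℝ => p.2 / p.1) (Lmap (-(p.2 / p.1 ^ 2)) p.1⁻¹) p := by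
  have hinv : HasFDerivAt (fun p : ℝ × ℝ => (p.1)⁻¹)
      ((-(p.1 ^ 2)⁻¹) • ContinuousLinearMap.fst ℝ ℝ ℝ) p :=
    (hasDerivAt_inv hp).comp_hasFDerivAt p hasFDerivAt_fst
  have h := hasFDerivAt_snd.mul hinv
  simp only [Pi.mul_def, ← div_eq_mul_inv] at h
  refine h.congr_fderiv (ContinuousLinearMap.ext fun v => ?_)
  simp [smul_eq_mul]
  ring

lemma hasFDerivAt_G (Φ P : ℝ → ℝ) (hΦ : ContDiff ℝ 2 Φ)
    (hP : ContDiffOn ℝ 2 P (Set.Ioi 0)) (C₁ : ℝ) (p : ℝ × ℝ) (hp : 0 < p.1) :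
    HasFDerivAt (fun p : ℝ × ℝ => C₁ - (Φ (p.2 / p.1) - P p.1))
      (Lmap (deriv Φ (p.2 / p.1) * (p.2 / p.1 * p.1⁻¹) + deriv P p.1)
        (-(deriv Φ (p.2 / p.1) * p.1⁻¹))) p := by
  have hne : p.1 ≠ 0 := ne_of_gt hp
  have hq := hasFDerivAt_q p hne
  have hΦq : HasFDerivAt (fun p : ℝ × ℝ => Φ (p.2 / p.1))
      (deriv Φ (p.2 / p.1) • Lmap (-(p.2 / p.1 ^ 2)) p.1⁻¹) p :=
    ((hΦ.differentiable (by norm_num) _).hasDerivAt).comp_hasFDerivAt p hq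
  have hPd : HasDerivAt P (deriv P p.1) p.1 :=
    ((hP.differentiableOn (by norm_num)).differentiableAt (Ioi_mem_nhds hp)).hasDerivAt
  have hPf : HasFDerivAt (fun p : ℝ × ℝ => P p.1)
      (deriv P p.1 • ContinuousLinearMap.fst ℝ ℝ ℝ) p :=
    hPd.comp_hasFDerivAt p hasFDerivAt_fst
  have h := (hΦq.sub hPf).const_sub C₁
  refine h.congr_fderiv (ContinuousLinearMap.ext fun v => ?_)
  simp [Lmap, smul_eq_mul]
  field_simp
  ring

/-- Quasi-convexity computation for G₁(ρ,m) = C₁ − (Φ(m/ρ) − P(ρ)):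
on the orthogonal complement of ∇G₁ one has Y = X(m/ρ + ρP'(ρ)/Φ'(m/ρ)) and
∇²G₁(r,r) = X²((2P'(ρ) + ρP''(ρ))/ρ − Φ''(m/ρ)(P'(ρ)/Φ'(m/ρ))²). -/
theorem hessian_of_G1_on_tangent_directions
    (Φ P : ℝ → ℝ) (hΦ : ContDiff ℝ 2 Φ) (hΦ' : ∀ s : ℝ, 0 < deriv Φ s)
    (hP : ContDiffOn ℝ 2 P (Set.Ioi 0))
    (C₁ : ℝ) (ρ m : ℝ) (hρ : 0 < ρ) (X Y : ℝ)
    (hr : fderiv ℝ (fun p : ℝ × ℝ => C₁ - (Φ (p.2 / p.1) - P p.1)) (ρ, m) (X, Y) = 0) :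
    Y = X * (m / ρ + ρ * deriv P ρ / deriv Φ (m / ρ)) ∧
    fderiv ℝ (fderiv ℝ (fun p : ℝ × ℝ => C₁ - (Φ (p.2 / p.1) - P p.1))) (ρ, m) (X, Y) (X, Y)
      = X ^ 2 * ((2 * deriv P ρ + ρ * deriv (deriv P) ρ) / ρ
          - deriv (deriv Φ) (m / ρ) * (deriv P ρ / deriv Φ (m / ρ)) ^ 2) := by
  have hρ0 : ρ ≠ 0 := ne_of_gt hρ
  have hA0 : deriv Φ (m / ρ) ≠ 0 := ne_of_gt (hΦ' _)
  -- first derivative at (ρ, m)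
  have hkey := hasFDerivAt_G Φ P hΦ hP C₁
  have h1 := (hkey (ρ, m) hρ).fderiv
  rw [h1] at hr
  simp only [Lmap_apply] at hr
  -- hr is now an algebraic relation
  have hY : Y = X * (m / ρ + ρ * deriv P ρ / deriv Φ (m / ρ)) := by
    field_simp at hr ⊢
    nlinarith [hr, sq_nonneg ρ]
  refine ⟨hY, ?_⟩
  -- second derivative
  have hev : fderiv ℝ (fun p : ℝ × ℝ => C₁ - (Φ (p.2 / p.1) - P p.1)) =ᶠ[nhds (ρ, m)]
      (fun p : ℝ × ℝ => Lmap (deriv Φ (p.2 / p.1) * (p.2 / p.1 * p.1⁻¹) + deriv P p.1)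
        (-(deriv Φ (p.2 / p.1) * p.1⁻¹))) := by
    filter_upwards [(isOpen_lt continuous_const continuous_fst).mem_nhds
      (show (0:ℝ) < (ρ, m).1 from hρ)] with p hp
    exact (hkey p hp).fderiv
  rw [hev.fderiv_eq]
  have hq := hasFDerivAt_q (ρ, m) hρ0
  have hinv : HasFDerivAt (fun p : ℝ × ℝ => (p.1)⁻¹)
      ((-(ρ ^ 2)⁻¹) • ContinuousLinearMap.fst ℝ ℝ ℝ) (ρ, m) :=
    (hasDerivAt_inv hρ0).comp_hasFDerivAt _ hasFDerivAt_fst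
  have hΦ2 : ContDiff ℝ 1 (deriv Φ) := by
    have h2 : ContDiff ℝ ((1 : ℕ) + 1) Φ := by exact_mod_cast hΦ
    exact (contDiff_succ_iff_deriv.mp h2).2.2
  have hAq : HasFDerivAt (fun p : ℝ × ℝ => deriv Φ (p.2 / p.1))
      (deriv (deriv Φ) (m / ρ) • Lmap (-(m / ρ ^ 2)) ρ⁻¹) (ρ, m) :=
    ((hΦ2.differentiable one_ne_zero _).hasDerivAt).comp_hasFDerivAt _ hq
  have hdP : HasDerivAt (deriv P) (deriv (deriv P) ρ) ρ :=
    (((hP.deriv_of_isOpen isOpen_Ioi (by norm_num)).differentiableOn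
      one_ne_zero).differentiableAt (Ioi_mem_nhds hρ)).hasDerivAt
  have hPff : HasFDerivAt (fun p : ℝ × ℝ => deriv P p.1)
      (deriv (deriv P) ρ • ContinuousLinearMap.fst ℝ ℝ ℝ) (ρ, m) :=
    hdP.comp_hasFDerivAt (f := Prod.fst) (ρ, m) hasFDerivAt_fst
  have hg₁ := (hAq.mul (hq.mul hinv)).add hPff
  have hg₂ := (hAq.mul hinv).neg
  have t1 := HasFDerivAt.smul_const hg₁ (ContinuousLinearMap.fst ℝ ℝ ℝ)
  have t2 := HasFDerivAt.smul_const hg₂ (ContinuousLinearMap.snd ℝ ℝ ℝ)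
  have hL := t1.add t2
  simp only [Pi.mul_def, Pi.add_def, Pi.neg_def] at hL
  simp only [Lmap]
  rw [hL.fderiv]
  simp only [ContinuousLinearMap.add_apply, ContinuousLinearMap.smulRight_apply,
    ContinuousLinearMap.smul_apply, ContinuousLinearMap.coe_fst', ContinuousLinearMap.coe_snd',
    Lmap_apply, ContinuousLinearMap.neg_apply, smul_eq_mul]
  rw [hY]
  field_simp
  ring
end

section
/- Let Φ, P, and F : ℝ → ℝ be C¹ (with P defined on (0,∞)), and for ρ > 0 define η(ρ,m) = ρ F(m/ρ) and q(ρ,m) = ρ F(m/ρ) φ(ρ,m), where φ(ρ,m) = Φ(m/ρ) − P(ρ). Then (η,q) is an entropy–entropy flux pair for the symmetric system with flux G(ρ,m) = (ρφ, mφ): that is, ∇q(ρ,m) = ∇η(ρ,m) · dG(ρ,m) for all ρ > 0, m ∈ ℝ. -/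
/-- (η, q) with η(ρ,m) = ρF(m/ρ) and q(ρ,m) = ρF(m/ρ)φ(ρ,m),
φ(ρ,m) = Φ(m/ρ) − P(ρ), is an entropy–entropy flux pair for the symmetric
Keyfitz–Kranzer system with flux G(ρ,m) = (ρφ, mφ): ∇q = ∇η · dG on {ρ > 0}. -/
theorem entropy_entropy_flux_pair
    (Φ P F : ℝ → ℝ) (hΦ : ContDiff ℝ 1 Φ) (hP : ContDiffOn ℝ 1 P (Set.Ioi 0))
    (hF : ContDiff ℝ 1 F) :
    ∀ ρ m : ℝ, 0 < ρ →
      fderiv ℝ (fun p : ℝ × ℝ => p.1 * F (p.2 / p.1) * (Φ (p.2 / p.1) - P p.1)) (ρ, m)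
        = (fderiv ℝ (fun p : ℝ × ℝ => p.1 * F (p.2 / p.1)) (ρ, m)).comp
            (fderiv ℝ (fun p : ℝ × ℝ =>
              (p.1 * (Φ (p.2 / p.1) - P p.1), p.2 * (Φ (p.2 / p.1) - P p.1))) (ρ, m)) := by
  intro ρ m hρ
  have hρ0 : ρ ≠ 0 := ne_of_gt hρ
  -- derivative of p ↦ (p.1)⁻¹
  have hinv : HasFDerivAt (fun p : ℝ × ℝ => (p.1)⁻¹)
      ((-(ρ ^ 2)⁻¹) • ContinuousLinearMap.fst ℝ ℝ ℝ) (ρ, m) :=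
    (hasDerivAt_inv hρ0).comp_hasFDerivAt (ρ, m) hasFDerivAt_fst
  -- derivative of p ↦ p.2 / p.1  (as p.2 * (p.1)⁻¹)
  have hv : HasFDerivAt (fun p : ℝ × ℝ => p.2 / p.1)
      (m • ((-(ρ ^ 2)⁻¹) • ContinuousLinearMap.fst ℝ ℝ ℝ) +
        ρ⁻¹ • ContinuousLinearMap.snd ℝ ℝ ℝ) (ρ, m) :=
    (hasFDerivAt_snd (𝕜 := ℝ) (p := ((ρ, m) : ℝ × ℝ))).mul hinv
  -- outer scalar derivatives
  have hFd : HasDerivAt F (deriv F (m / ρ)) (m / ρ) :=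
    ((hF.differentiable one_ne_zero) (m / ρ)).hasDerivAt
  have hΦd : HasDerivAt Φ (deriv Φ (m / ρ)) (m / ρ) :=
    ((hΦ.differentiable one_ne_zero) (m / ρ)).hasDerivAt
  have hPd : HasDerivAt P (deriv P ρ) ρ :=
    (((hP.differentiableOn one_ne_zero) ρ hρ).differentiableAt
      (isOpen_Ioi.mem_nhds hρ)).hasDerivAt
  have hFv : HasFDerivAt (fun p : ℝ × ℝ => F (p.2 / p.1))
      (deriv F (m / ρ) •
        (m • ((-(ρ ^ 2)⁻¹) • ContinuousLinearMap.fst ℝ ℝ ℝ) +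
          ρ⁻¹ • ContinuousLinearMap.snd ℝ ℝ ℝ)) (ρ, m) :=
    hFd.comp_hasFDerivAt (ρ, m) hv
  have hΦv : HasFDerivAt (fun p : ℝ × ℝ => Φ (p.2 / p.1))
      (deriv Φ (m / ρ) •
        (m • ((-(ρ ^ 2)⁻¹) • ContinuousLinearMap.fst ℝ ℝ ℝ) +
          ρ⁻¹ • ContinuousLinearMap.snd ℝ ℝ ℝ)) (ρ, m) :=
    hΦd.comp_hasFDerivAt (ρ, m) hv
  have hPv : HasFDerivAt (fun p : ℝ × ℝ => P p.1)
      (deriv P ρ • ContinuousLinearMap.fst ℝ ℝ ℝ) (ρ, m) :=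
    hPd.comp_hasFDerivAt (ρ, m) hasFDerivAt_fst
  -- φ
  have hφ := hΦv.sub hPv
  -- η = ρ F(m/ρ)
  have hη := (hasFDerivAt_fst (𝕜 := ℝ) (p := ((ρ, m) : ℝ × ℝ))).mul hFv
  -- q = η * φ
  have hq := hη.mul hφ
  -- G components
  have hG1 := (hasFDerivAt_fst (𝕜 := ℝ) (p := ((ρ, m) : ℝ × ℝ))).mul hφ
  have hG2 := (hasFDerivAt_snd (𝕜 := ℝ) (p := ((ρ, m) : ℝ × ℝ))).mul hφ
  have hG := hG1.prodMk hG2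
  erw [hq.fderiv, hη.fderiv, hG.fderiv]
  refine ContinuousLinearMap.ext fun u => ?_
  obtain ⟨x, y⟩ := u
  simp [smul_eq_mul]
  field_simp
  ring
end

section
/- Let Φ, P, F be C² (P on (0,∞)), f, g continuous, ε > 0, and let (ρ, m) be a classical solution of the viscous system ρ_t + (ρφ(ρ,m))_x = ε ρ_xx + f(ρ,m), m_t + (mφ(ρ,m))_x = ε m_xx + g(ρ,m) on an open set where ρ > 0, with φ(ρ,m) = Φ(m/ρ) − P(ρ). Then for η(ρ,m) = ρF(m/ρ) and q(ρ,m) = ρF(m/ρ)φ(ρ,m), the pointwise identity η(ρ,m)_t + q(ρ,m)_x = ε η(ρ,m)_xx − ε (F''(m/ρ)/ρ)((m/ρ)ρ_x − m_x)² + ∇η(ρ,m) · (f(ρ,m), g(ρ,m)) holds. -/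
/-- Entropy balance identity for classical solutions of the viscous symmetric
Keyfitz–Kranzer system: with η = ρF(m/ρ), q = ηφ, φ = Φ(m/ρ) − P(ρ),
η_t + q_x = εη_xx − ε(F''(m/ρ)/ρ)((m/ρ)ρ_x − m_x)² + ∇η·(f,g). -/
theorem viscous_entropy_balance
    (Φ P F : ℝ → ℝ) (hΦ : ContDiff ℝ 2 Φ) (hP : ContDiffOn ℝ 2 P (Set.Ioi 0))
    (hF : ContDiff ℝ 2 F)
    (f g : ℝ → ℝ → ℝ) (hf : Continuous (Function.uncurry f))
    (hg : Continuous (Function.uncurry g))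
    (ε : ℝ) (hε : 0 < ε)
    (U : Set (ℝ × ℝ)) (hU : IsOpen U)
    (ρ m : ℝ → ℝ → ℝ)
    (hρ : ContDiffOn ℝ 2 (fun p : ℝ × ℝ => ρ p.1 p.2) U)
    (hm : ContDiffOn ℝ 2 (fun p : ℝ × ℝ => m p.1 p.2) U)
    (hpos : ∀ x t : ℝ, (x, t) ∈ U → 0 < ρ x t)
    (hpde1 : ∀ x t : ℝ, (x, t) ∈ U →
      deriv (fun s => ρ x s) t
        + deriv (fun y => ρ y t * (Φ (m y t / ρ y t) - P (ρ y t))) x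
        = ε * deriv (fun y => deriv (fun z => ρ z t) y) x + f (ρ x t) (m x t))
    (hpde2 : ∀ x t : ℝ, (x, t) ∈ U →
      deriv (fun s => m x s) t
        + deriv (fun y => m y t * (Φ (m y t / ρ y t) - P (ρ y t))) x
        = ε * deriv (fun y => deriv (fun z => m z t) y) x + g (ρ x t) (m x t)) :
    ∀ x t : ℝ, (x, t) ∈ U →
      deriv (fun s => ρ x s * F (m x s / ρ x s)) t
        + deriv (fun y => ρ y t * F (m y t / ρ y t) * (Φ (m y t / ρ y t) - P (ρ y t))) x
        = ε * deriv (fun y => deriv (fun z => ρ z t * F (m z t / ρ z t)) y) x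
          - ε * (deriv (deriv F) (m x t / ρ x t) / ρ x t)
              * ((m x t / ρ x t) * deriv (fun y => ρ y t) x
                  - deriv (fun y => m y t) x) ^ 2
          + fderiv ℝ (fun p : ℝ × ℝ => p.1 * F (p.2 / p.1)) (ρ x t, m x t)
              (f (ρ x t) (m x t), g (ρ x t) (m x t)) := by
  intro x t hxt
  have ha : 0 < ρ x t := hpos x t hxt
  have ha' : ρ x t ≠ 0 := ha.ne'
  -- basic derivative facts for F, Φ, P
  have hFdiff : Differentiable ℝ F := hF.differentiable two_ne_zero
  have hFd : ∀ v : ℝ, HasDerivAt F (deriv F v) v := fun v => (hFdiff v).hasDerivAt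
  have hF1 : ContDiff ℝ 1 (deriv F) := by
    have h2 : ContDiff ℝ (1 + 1 : ℕ) F := by exact_mod_cast hF
    exact (contDiff_succ_iff_deriv.mp h2).2.2
  have hFdd : ∀ v : ℝ, HasDerivAt (deriv F) (deriv (deriv F) v) v :=
    fun v => ((hF1.differentiable one_ne_zero) v).hasDerivAt
  have hΦd : ∀ v : ℝ, HasDerivAt Φ (deriv Φ v) v :=
    fun v => ((hΦ.differentiable two_ne_zero) v).hasDerivAt
  have hPd : HasDerivAt P (deriv P (ρ x t)) (ρ x t) :=
    (((hP.differentiableOn two_ne_zero).differentiableAt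
      (isOpen_Ioi.mem_nhds ha))).hasDerivAt
  -- the spatial slice
  set V : Set ℝ := {y : ℝ | (y, t) ∈ U} with hVdef
  have hVopen : IsOpen V := hU.preimage (continuous_id.prodMk continuous_const)
  have hxV : x ∈ V := hxt
  have hcurve : ContDiff ℝ 2 (fun y : ℝ => (y, t)) := contDiff_id.prodMk contDiff_const
  have hrC : ContDiffOn ℝ 2 (fun y => ρ y t) V :=
    hρ.comp hcurve.contDiffOn (fun y hy => hy)
  have hmC : ContDiffOn ℝ 2 (fun y => m y t) V :=
    hm.comp hcurve.contDiffOn (fun y hy => hy)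
  have hrd : ∀ y ∈ V, HasDerivAt (fun z => ρ z t) (deriv (fun z => ρ z t) y) y := fun y hy =>
    ((hrC.contDiffAt (hVopen.mem_nhds hy)).differentiableAt two_ne_zero).hasDerivAt
  have hmd : ∀ y ∈ V, HasDerivAt (fun z => m z t) (deriv (fun z => m z t) y) y := fun y hy =>
    ((hmC.contDiffAt (hVopen.mem_nhds hy)).differentiableAt two_ne_zero).hasDerivAt
  -- u = m/ρ along the slice
  have hud : ∀ y ∈ V, HasDerivAt (fun z => m z t / ρ z t)
      ((deriv (fun z => m z t) y * ρ y t - m y t * deriv (fun z => ρ z t) y) / ρ y t ^ 2) y :=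
    fun y hy => (hmd y hy).div (hrd y hy) (hpos y t hy).ne'
  -- η along the slice: first derivative everywhere on V
  have hNd : ∀ y ∈ V, HasDerivAt (fun z => ρ z t * F (m z t / ρ z t))
      (deriv (fun z => ρ z t) y * F (m y t / ρ y t)
        + ρ y t * (deriv F (m y t / ρ y t)
          * ((deriv (fun z => m z t) y * ρ y t - m y t * deriv (fun z => ρ z t) y)
              / ρ y t ^ 2))) y := fun y hy =>
    (hrd y hy).mul ((hFd _).comp y (hud y hy))
  -- second spatial derivatives of ρ and m exist at x
  have hrC1 : ContDiffOn ℝ 1 (deriv (fun z => ρ z t)) V :=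
    hrC.deriv_of_isOpen hVopen (by norm_num)
  have hmC1 : ContDiffOn ℝ 1 (deriv (fun z => m z t)) V :=
    hmC.deriv_of_isOpen hVopen (by norm_num)
  have hdr2 : HasDerivAt (deriv (fun z => ρ z t)) (deriv (deriv (fun z => ρ z t)) x) x :=
    ((hrC1.contDiffAt (hVopen.mem_nhds hxV)).differentiableAt one_ne_zero).hasDerivAt
  have hdm2 : HasDerivAt (deriv (fun z => m z t)) (deriv (deriv (fun z => m z t)) x) x :=
    ((hmC1.contDiffAt (hVopen.mem_nhds hxV)).differentiableAt one_ne_zero).hasDerivAt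
  -- point values of first derivatives at x
  have hru : HasDerivAt (fun z => ρ z t) (deriv (fun z => ρ z t) x) x := hrd x hxV
  have hmu : HasDerivAt (fun z => m z t) (deriv (fun z => m z t) x) x := hmd x hxV
  have huu := hud x hxV
  -- second derivative of η in x : differentiate the formula for deriv η
  have hEq : deriv (fun z => ρ z t * F (m z t / ρ z t))
      =ᶠ[nhds x] (fun y => deriv (fun z => ρ z t) y * F (m y t / ρ y t)
        + ρ y t * (deriv F (m y t / ρ y t)
          * ((deriv (fun z => m z t) y * ρ y t - m y t * deriv (fun z => ρ z t) y)
              / ρ y t ^ 2))) :=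
    Filter.eventuallyEq_of_mem (hVopen.mem_nhds hxV) (fun y hy => (hNd y hy).deriv)
  have hFux : HasDerivAt (fun y => F (m y t / ρ y t))
      (deriv F (m x t / ρ x t)
        * ((deriv (fun z => m z t) x * ρ x t - m x t * deriv (fun z => ρ z t) x)
            / ρ x t ^ 2)) x := (hFd _).comp x huu
  have hdFux : HasDerivAt (fun y => deriv F (m y t / ρ y t))
      (deriv (deriv F) (m x t / ρ x t)
        * ((deriv (fun z => m z t) x * ρ x t - m x t * deriv (fun z => ρ z t) x)
            / ρ x t ^ 2)) x := (hFdd _).comp x huu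
  have hu'x := (((hdm2.mul hru).sub (hmu.mul hdr2)).div (hru.pow 2) (pow_ne_zero 2 ha'))
  have hbig := (hdr2.mul hFux).add (hru.mul (hdFux.mul hu'x))
  have hNxx := hEq.deriv_eq.trans hbig.deriv
  -- time derivatives at (x,t)
  have hcurve2 : Differentiable ℝ (fun s : ℝ => (x, s)) :=
    (differentiable_const x).prodMk differentiable_id
  have hrt : HasDerivAt (fun s => ρ x s) (deriv (fun s => ρ x s) t) t := by
    have h1 : DifferentiableAt ℝ (fun p : ℝ × ℝ => ρ p.1 p.2) (x, t) :=
      (hρ.contDiffAt (hU.mem_nhds hxt)).differentiableAt two_ne_zero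
    exact (h1.comp t (hcurve2 t)).hasDerivAt
  have hmt : HasDerivAt (fun s => m x s) (deriv (fun s => m x s) t) t := by
    have h1 : DifferentiableAt ℝ (fun p : ℝ × ℝ => m p.1 p.2) (x, t) :=
      (hm.contDiffAt (hU.mem_nhds hxt)).differentiableAt two_ne_zero
    exact (h1.comp t (hcurve2 t)).hasDerivAt
  have hut : HasDerivAt (fun s => m x s / ρ x s)
      ((deriv (fun s => m x s) t * ρ x t - m x t * deriv (fun s => ρ x s) t) / ρ x t ^ 2) t :=
    hmt.div hrt ha'
  have hNt : HasDerivAt (fun s => ρ x s * F (m x s / ρ x s))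
      (deriv (fun s => ρ x s) t * F (m x t / ρ x t)
        + ρ x t * (deriv F (m x t / ρ x t)
          * ((deriv (fun s => m x s) t * ρ x t - m x t * deriv (fun s => ρ x s) t)
              / ρ x t ^ 2))) t := hrt.mul ((hFd _).comp t hut)
  -- φ = Φ(u) - P(ρ) spatial derivative at x
  have hφx : HasDerivAt (fun y => Φ (m y t / ρ y t) - P (ρ y t))
      (deriv Φ (m x t / ρ x t)
          * ((deriv (fun z => m z t) x * ρ x t - m x t * deriv (fun z => ρ z t) x)
              / ρ x t ^ 2)
        - deriv P (ρ x t) * deriv (fun z => ρ z t) x) x :=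
    ((hΦd _).comp x huu).sub (hPd.comp x hru)
  -- flux derivatives at x and entropy flux derivative
  have hflux1 : HasDerivAt (fun y => ρ y t * (Φ (m y t / ρ y t) - P (ρ y t))) _ x := hru.mul hφx
  have hflux2 : HasDerivAt (fun y => m y t * (Φ (m y t / ρ y t) - P (ρ y t))) _ x := hmu.mul hφx
  have hQx : HasDerivAt (fun y => ρ y t * F (m y t / ρ y t) * (Φ (m y t / ρ y t) - P (ρ y t))) _ x :=
    (hNd x hxV).mul hφx
  -- PDEs in explicit form
  have E1 : deriv (fun s => ρ x s) t
      + (deriv (fun z => ρ z t) x * (Φ (m x t / ρ x t) - P (ρ x t))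
         + ρ x t * (deriv Φ (m x t / ρ x t)
            * ((deriv (fun z => m z t) x * ρ x t - m x t * deriv (fun z => ρ z t) x)
                / ρ x t ^ 2)
          - deriv P (ρ x t) * deriv (fun z => ρ z t) x))
      = ε * deriv (deriv (fun z => ρ z t)) x + f (ρ x t) (m x t) := by
    have h := hpde1 x t hxt
    rw [hflux1.deriv] at h
    exact h
  have E2 : deriv (fun s => m x s) t
      + (deriv (fun z => m z t) x * (Φ (m x t / ρ x t) - P (ρ x t))
         + m x t * (deriv Φ (m x t / ρ x t)
            * ((deriv (fun z => m z t) x * ρ x t - m x t * deriv (fun z => ρ z t) x)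
                / ρ x t ^ 2)
          - deriv P (ρ x t) * deriv (fun z => ρ z t) x))
      = ε * deriv (deriv (fun z => m z t)) x + g (ρ x t) (m x t) := by
    have h := hpde2 x t hxt
    rw [hflux2.deriv] at h
    exact h
  -- evaluate the fderiv term via a directional derivative
  have hfd : fderiv ℝ (fun p : ℝ × ℝ => p.1 * F (p.2 / p.1)) (ρ x t, m x t)
      (f (ρ x t) (m x t), g (ρ x t) (m x t))
      = f (ρ x t) (m x t) * F (m x t / ρ x t)
        + ρ x t * (deriv F (m x t / ρ x t)
          * ((g (ρ x t) (m x t) * ρ x t - m x t * f (ρ x t) (m x t)) / ρ x t ^ 2)) := by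
    have hqd : DifferentiableAt ℝ (fun p : ℝ × ℝ => p.2 / p.1) (ρ x t, m x t) := by
      simp only [div_eq_mul_inv]
      exact differentiableAt_snd.mul (differentiableAt_fst.inv ha')
    have hdiffη : DifferentiableAt ℝ (fun p : ℝ × ℝ => p.1 * F (p.2 / p.1)) (ρ x t, m x t) :=
      differentiableAt_fst.mul ((hFdiff _).comp _ hqd)
    have hc1 : HasDerivAt (fun s : ℝ => ρ x t + s * f (ρ x t) (m x t)) (f (ρ x t) (m x t)) 0 := by
      simpa using ((hasDerivAt_id (0:ℝ)).mul_const (f (ρ x t) (m x t))).const_add (ρ x t)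
    have hc2 : HasDerivAt (fun s : ℝ => m x t + s * g (ρ x t) (m x t)) (g (ρ x t) (m x t)) 0 := by
      simpa using ((hasDerivAt_id (0:ℝ)).mul_const (g (ρ x t) (m x t))).const_add (m x t)
    have hc : HasDerivAt (fun s : ℝ =>
        ((ρ x t + s * f (ρ x t) (m x t), m x t + s * g (ρ x t) (m x t)) : ℝ × ℝ))
        ((f (ρ x t) (m x t), g (ρ x t) (m x t))) 0 := hc1.prodMk hc2
    have hdiffη' : HasFDerivAt (fun p : ℝ × ℝ => p.1 * F (p.2 / p.1))
        (fderiv ℝ (fun p : ℝ × ℝ => p.1 * F (p.2 / p.1)) (ρ x t, m x t))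
        (ρ x t + 0 * f (ρ x t) (m x t), m x t + 0 * g (ρ x t) (m x t)) := by
      norm_num
      exact hdiffη.hasFDerivAt
    have h1 : HasDerivAt (fun s : ℝ =>
        (ρ x t + s * f (ρ x t) (m x t))
          * F ((m x t + s * g (ρ x t) (m x t)) / (ρ x t + s * f (ρ x t) (m x t))))
        (fderiv ℝ (fun p : ℝ × ℝ => p.1 * F (p.2 / p.1)) (ρ x t, m x t)
          (f (ρ x t) (m x t), g (ρ x t) (m x t))) 0 := by
      have := hdiffη'.comp_hasDerivAt 0 hc; exact this
    have h2 : HasDerivAt (fun s : ℝ =>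
        (ρ x t + s * f (ρ x t) (m x t))
          * F ((m x t + s * g (ρ x t) (m x t)) / (ρ x t + s * f (ρ x t) (m x t))))
        (f (ρ x t) (m x t) * F (m x t / ρ x t)
          + ρ x t * (deriv F (m x t / ρ x t)
            * ((g (ρ x t) (m x t) * ρ x t - m x t * f (ρ x t) (m x t)) / ρ x t ^ 2))) 0 := by
      have hq : HasDerivAt (fun s : ℝ =>
          (m x t + s * g (ρ x t) (m x t)) / (ρ x t + s * f (ρ x t) (m x t)))
          ((g (ρ x t) (m x t) * ρ x t - m x t * f (ρ x t) (m x t)) / ρ x t ^ 2) 0 := by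
        have := hc2.div hc1 (by simpa using ha')
        simp at this; exact this
      have := hc1.mul ((hFd _).comp 0 (by simpa using hq))
      simp at this; exact this
    exact (h1.unique h2)
  -- now rewrite everything and finish with algebra
  show deriv (fun s => ρ x s * F (m x s / ρ x s)) t
        + deriv (fun y => ρ y t * F (m y t / ρ y t) * (Φ (m y t / ρ y t) - P (ρ y t))) x
      = ε * deriv (deriv (fun z => ρ z t * F (m z t / ρ z t))) x
          - ε * (deriv (deriv F) (m x t / ρ x t) / ρ x t)
              * ((m x t / ρ x t) * deriv (fun y => ρ y t) x
                  - deriv (fun y => m y t) x) ^ 2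
          + fderiv ℝ (fun p : ℝ × ℝ => p.1 * F (p.2 / p.1)) (ρ x t, m x t)
              (f (ρ x t) (m x t), g (ρ x t) (m x t))
  rw [hNt.deriv, hQx.deriv, hNxx, hfd]
  -- solve for time derivatives from the PDEs
  have hrt_eq : deriv (fun s => ρ x s) t
      = ε * deriv (deriv (fun z => ρ z t)) x + f (ρ x t) (m x t)
        - (deriv (fun z => ρ z t) x * (Φ (m x t / ρ x t) - P (ρ x t))
           + ρ x t * (deriv Φ (m x t / ρ x t)
              * ((deriv (fun z => m z t) x * ρ x t - m x t * deriv (fun z => ρ z t) x)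
                  / ρ x t ^ 2)
            - deriv P (ρ x t) * deriv (fun z => ρ z t) x)) := by linarith [E1]
  have hmt_eq : deriv (fun s => m x s) t
      = ε * deriv (deriv (fun z => m z t)) x + g (ρ x t) (m x t)
        - (deriv (fun z => m z t) x * (Φ (m x t / ρ x t) - P (ρ x t))
           + m x t * (deriv Φ (m x t / ρ x t)
              * ((deriv (fun z => m z t) x * ρ x t - m x t * deriv (fun z => ρ z t) x)
                  / ρ x t ^ 2)
            - deriv P (ρ x t) * deriv (fun z => ρ z t) x)) := by linarith [E2]
  rw [hrt_eq, hmt_eq]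
  simp only [Pi.mul_apply, Pi.sub_apply, Pi.div_apply, Pi.pow_apply]
  field_simp
  ring
end
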